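/- (Parameter identification; core of Theorem 1.) Let Φ be the standard normal cumulative distribution function. Let p, K ≥ 1, λ*, λ⁰ > 0, β*, β⁰ ∈ ℝ^p, α*, α⁰ ∈ ℝ^K, and ρ*, ρ⁰ ∈ (−1, 1). Suppose that for all x_t ∈ ℝ^p, all x_w ∈ ℝ^K, and all w ∈ {0, 1}: λ* exp(⟨x_t, β*⟩) Φ(⟨x_w, α*⟩ + ρ*)^w (1 − Φ(⟨x_w, α*⟩ + ρ*))^{1−w} = λ⁰ exp(⟨x_t, β⁰⟩) Φ(⟨x_w, α⁰⟩ + ρ⁰)^w (1 − Φ(⟨x_w, α⁰⟩ + ρ⁰))^{1−w}. Then λ* = λ⁰, β* = β⁰, α* = α⁰, and ρ* = ρ⁰. -/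
import Mathlib


open Real MeasureTheory

/-- The standard normal cumulative distribution function `Φ`. -/
noncomputable def stdNormalCDF (x : ℝ) : ℝ :=
  ∫ t in Set.Iic x, (Real.sqrt (2 * π))⁻¹ * Real.exp (-t ^ 2 / 2)

lemma gaussDens_integrable :
    Integrable (fun t : ℝ => (Real.sqrt (2 * π))⁻¹ * Real.exp (-t ^ 2 / 2)) := by
  have h := (integrable_exp_neg_mul_sq (by norm_num : (0:ℝ) < 1/2)).const_mul
    (Real.sqrt (2 * π))⁻¹
  convert h using 2 with t
  congr 1
  ring

lemma gaussDens_pos (t : ℝ) :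
    0 < (Real.sqrt (2 * π))⁻¹ * Real.exp (-t ^ 2 / 2) := by
  have : 0 < Real.sqrt (2 * π) := Real.sqrt_pos.mpr (by positivity)
  positivity

lemma stdNormalCDF_strictMono : StrictMono stdNormalCDF := by
  intro a b hab
  set f : ℝ → ℝ := fun t => (Real.sqrt (2 * π))⁻¹ * Real.exp (-t ^ 2 / 2) with hf
  have hint := gaussDens_integrable
  have hsplit : stdNormalCDF b = stdNormalCDF a + ∫ t in Set.Ioc a b, f t := by
    rw [stdNormalCDF, stdNormalCDF,
      ← MeasureTheory.setIntegral_union (Set.Iic_disjoint_Ioc le_rfl) measurableSet_Ioc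
        hint.integrableOn hint.integrableOn,
      Set.Iic_union_Ioc_eq_Iic hab.le]
  have hpos : 0 < ∫ t in Set.Ioc a b, f t := by
    rw [← intervalIntegral.integral_of_le hab.le]
    apply intervalIntegral.intervalIntegral_pos_of_pos_on
    · exact hint.intervalIntegrable
    · exact fun x _ => gaussDens_pos x
    · exact hab
  linarith [hsplit]

/-- Parameter identification (core of Theorem 1): if two parameter vectors produce
the same per-subject integrated observed-likelihood contribution
`λ exp(⟨x_t, β⟩) Φ(⟨x_w, α⟩ + ρ)^w (1 − Φ(⟨x_w, α⟩ + ρ))^{1−w}`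
for all covariates `x_t`, `x_w` and treatments `w ∈ {0,1}`, then they coincide. -/
theorem parameter_identification (p K : ℕ) (hp : 1 ≤ p) (hK : 1 ≤ K)
    (lams lam0 : ℝ) (hlams : 0 < lams) (hlam0 : 0 < lam0)
    (βs β0 : Fin p → ℝ) (αs α0 : Fin K → ℝ) (ρs ρ0 : ℝ)
    (hρs₁ : -1 < ρs) (hρs₂ : ρs < 1) (hρ0₁ : -1 < ρ0) (hρ0₂ : ρ0 < 1)
    (h : ∀ (xt : Fin p → ℝ) (xw : Fin K → ℝ) (w : ℕ), w = 0 ∨ w = 1 →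
      lams * Real.exp (∑ i, xt i * βs i) *
          stdNormalCDF ((∑ i, xw i * αs i) + ρs) ^ w *
          (1 - stdNormalCDF ((∑ i, xw i * αs i) + ρs)) ^ (1 - w)
        = lam0 * Real.exp (∑ i, xt i * β0 i) *
            stdNormalCDF ((∑ i, xw i * α0 i) + ρ0) ^ w *
            (1 - stdNormalCDF ((∑ i, xw i * α0 i) + ρ0)) ^ (1 - w)) :
    lams = lam0 ∧ βs = β0 ∧ αs = α0 ∧ ρs = ρ0 := by
  have e1 : ∀ (xt : Fin p → ℝ) (xw : Fin K → ℝ),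
      lams * Real.exp (∑ i, xt i * βs i) * stdNormalCDF ((∑ i, xw i * αs i) + ρs)
        = lam0 * Real.exp (∑ i, xt i * β0 i) * stdNormalCDF ((∑ i, xw i * α0 i) + ρ0) := by
    intro xt xw
    have := h xt xw 1 (Or.inr rfl)
    simpa using this
  have e0 : ∀ (xt : Fin p → ℝ) (xw : Fin K → ℝ),
      lams * Real.exp (∑ i, xt i * βs i) * (1 - stdNormalCDF ((∑ i, xw i * αs i) + ρs))
        = lam0 * Real.exp (∑ i, xt i * β0 i) * (1 - stdNormalCDF ((∑ i, xw i * α0 i) + ρ0)) := by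
    intro xt xw
    have := h xt xw 0 (Or.inl rfl)
    simpa using this
  have hsum : ∀ (xt : Fin p → ℝ),
      lams * Real.exp (∑ i, xt i * βs i) = lam0 * Real.exp (∑ i, xt i * β0 i) := by
    intro xt
    have h1 := e1 xt 0
    have h0 := e0 xt 0
    linear_combination h1 + h0
  have hlam : lams = lam0 := by
    have := hsum 0
    simpa using this
  subst hlam
  have hS : ∀ (xt : Fin p → ℝ), (∑ i, xt i * βs i) = ∑ i, xt i * β0 i := by
    intro xt
    have := hsum xt
    have hexp : Real.exp (∑ i, xt i * βs i) = Real.exp (∑ i, xt i * β0 i) :=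
      mul_left_cancel₀ (ne_of_gt hlams) this
    exact Real.exp_injective hexp
  have hβ : βs = β0 := by
    funext j
    have := hS (Pi.single j 1)
    simpa [Pi.single_apply, ite_mul, Finset.sum_ite_eq'] using this
  have hΦ : ∀ (xw : Fin K → ℝ),
      stdNormalCDF ((∑ i, xw i * αs i) + ρs) = stdNormalCDF ((∑ i, xw i * α0 i) + ρ0) := by
    intro xw
    have := e1 0 xw
    rw [hβ] at this
    exact mul_left_cancel₀ (by positivity) this
  have harg : ∀ (xw : Fin K → ℝ),
      (∑ i, xw i * αs i) + ρs = (∑ i, xw i * α0 i) + ρ0 := by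
    intro xw
    exact stdNormalCDF_strictMono.injective (hΦ xw)
  have hρ : ρs = ρ0 := by
    have := harg 0
    simpa using this
  have hα : αs = α0 := by
    funext j
    have := harg (Pi.single j 1)
    rw [hρ] at this
    have h' : αs j + ρ0 = α0 j + ρ0 := by
      simpa [Pi.single_apply, ite_mul, Finset.sum_ite_eq'] using this
    linarith
  exact ⟨rfl, hβ, hα, hρ⟩
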